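/- Let f : R^N -> R be continuous and Lambda-convex for a cone Lambda in R^N, meaning f(t y + (1-t) y') <= t f(y) + (1-t) f(y') whenever y - y' is in Lambda and t is in [0,1], and assume f has linear growth |f(y)| <= L(1 + |y|). If Lambda spans R^N, then f is globally Lipschitz with Lipschitz constant bounded by a constant depending only on L and the cone Lambda. -/

import Mathlib

open scoped NNReal
open Filter Topology

/-- A convex function on `ℝ` with linear growth has slopes bounded above by `B`. -/
lemma convex_slope_le (g : ℝ → ℝ) (hg : ConvexOn ℝ Set.univ g)
    (A B : ℝ) (hgrow : ∀ u, |g u| ≤ A + B * |u|) {t s : ℝ} (hts : t < s) :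
    g s - g t ≤ B * (s - t) := by
  have hst : 0 < s - t := sub_pos.mpr hts
  have hev : ∀ᶠ M in atTop, g s - g t ≤
      (s - t) / (M + (s - t)) * (2*A + B*|t| + B*(s+M)) := by
    filter_upwards [eventually_ge_atTop (max 1 (-s))] with M hM
    have hM1 : (1:ℝ) ≤ M := le_trans (le_max_left _ _) hM
    have hMs : 0 ≤ s + M := by
      have := le_trans (le_max_right 1 (-s)) hM; linarith
    have hden : 0 < M + (s - t) := by linarith
    set a := M / (M + (s-t)) with ha_def
    set b := (s-t) / (M + (s-t)) with hb_def
    have hab : a + b = 1 := by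
      rw [ha_def, hb_def, ← add_div, div_self (ne_of_gt hden)]
    have ha : 0 ≤ a := by positivity
    have hb : 0 ≤ b := by positivity
    have hcomb : a * t + b * (s + M) = s := by
      rw [ha_def, hb_def]; field_simp; ring
    have hcv := hg.2 (Set.mem_univ t) (Set.mem_univ (s+M)) ha hb hab
    simp only [smul_eq_mul] at hcv
    rw [hcomb] at hcv
    have ha' : a = 1 - b := by linarith
    rw [ha'] at hcv
    have h1 : g s - g t ≤ b * (g (s+M) - g t) := by nlinarith [hcv]
    have h2 : g (s+M) ≤ A + B * (s+M) := by
      have := hgrow (s+M)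
      rw [abs_of_nonneg hMs] at this
      exact (abs_le.mp this).2
    have h3 : -(A + B * |t|) ≤ g t := (abs_le.mp (hgrow t)).1
    have h4 : g (s+M) - g t ≤ 2*A + B*|t| + B*(s+M) := by linarith
    calc g s - g t ≤ b * (g (s+M) - g t) := h1
      _ ≤ b * (2*A + B*|t| + B*(s+M)) := mul_le_mul_of_nonneg_left h4 hb
  have htend : Tendsto (fun M : ℝ => (s - t) / (M + (s - t)) * (2*A + B*|t| + B*(s+M)))
      atTop (𝓝 (B * (s - t))) := by
    have key : Tendsto (fun M : ℝ => (s-t) * B + (s-t) * (2*A + B*|t| + B*s - B*(s-t)) / (M + (s-t)))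
        atTop (𝓝 ((s-t) * B + 0)) := by
      refine Tendsto.const_add _ ?_
      have h1 : Tendsto (fun M : ℝ => M + (s - t)) atTop atTop :=
        tendsto_atTop_add_const_right _ _ tendsto_id
      have h2 : Tendsto (fun M : ℝ => (M + (s - t))⁻¹) atTop (𝓝 0) :=
        tendsto_inv_atTop_zero.comp h1
      simpa [div_eq_mul_inv, mul_comm] using h2.const_mul ((s-t) * (2*A + B*|t| + B*s - B*(s-t)))
    rw [add_zero, mul_comm (s-t) B] at key
    refine Tendsto.congr' ?_ key
    filter_upwards [eventually_gt_atTop (max 0 (-(s-t)))] with M hM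
    have hden : M + (s - t) ≠ 0 := by
      have := lt_of_le_of_lt (le_max_right 0 (-(s-t))) hM; intro h; nlinarith
    field_simp
    ring
  exact ge_of_tendsto htend hev

/-- A convex function on `ℝ` with linear growth is `B`-Lipschitz. -/
lemma convex_abs_sub_le (g : ℝ → ℝ) (hg : ConvexOn ℝ Set.univ g)
    (A B : ℝ) (hgrow : ∀ u, |g u| ≤ A + B * |u|) (t s : ℝ) :
    |g s - g t| ≤ B * |s - t| := by
  have hneg : ConvexOn ℝ Set.univ (fun u => g (-u)) := by
    refine ⟨convex_univ, fun x _ y _ a b ha hb hab => ?_⟩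
    have h := hg.2 (Set.mem_univ (-x)) (Set.mem_univ (-y)) ha hb hab
    have e : a • -x + b • -y = -(a • x + b • y) := by
      simp only [smul_eq_mul]; ring
    rwa [e] at h
  have hneggrow : ∀ u, |g (-u)| ≤ A + B * |u| := fun u => by
    simpa [abs_neg] using hgrow (-u)
  rcases lt_trichotomy t s with h | h | h
  · have h1 := convex_slope_le g hg A B hgrow h
    have h2 := convex_slope_le _ hneg A B hneggrow (neg_lt_neg h)
    simp only [neg_neg] at h2
    rw [abs_of_pos (sub_pos.mpr h)]
    rw [abs_le]
    constructor
    · have : -t - -s = s - t := by ring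
      rw [this] at h2; linarith
    · exact h1
  · simp [h]
  · have h1 := convex_slope_le g hg A B hgrow h
    have h2 := convex_slope_le _ hneg A B hneggrow (neg_lt_neg h)
    simp only [neg_neg] at h2
    rw [abs_of_neg (sub_neg.mpr h)]
    have he : -s - -t = t - s := by ring
    rw [he] at h2
    rw [abs_le]
    constructor
    · linarith
    · linarith

theorem stmt_17 {N : ℕ} (Λ : Set (EuclideanSpace ℝ (Fin N)))
    (hcone : ∀ c : ℝ, 0 < c → ∀ y ∈ Λ, c • y ∈ Λ)
    (hspan : Submodule.span ℝ Λ = ⊤)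
    (L : ℝ) (hL : 0 < L) :
    ∃ K : ℝ≥0, ∀ f : EuclideanSpace ℝ (Fin N) → ℝ, Continuous f →
      (∀ y, |f y| ≤ L * Real.sqrt (1 + ‖y‖ ^ 2)) →
      (∀ y y' : EuclideanSpace ℝ (Fin N), y - y' ∈ Λ → ∀ t ∈ Set.Icc (0 : ℝ) 1,
        f (t • y + (1 - t) • y') ≤ t * f y + (1 - t) * f y') →
      LipschitzWith K f := by
  classical
  obtain ⟨s, hsub, hsspan, hli⟩ := exists_linearIndependent ℝ Λ
  haveI : Fintype ↥s := (hli.setFinite).fintype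
  let bas : Module.Basis ↥s ℝ (EuclideanSpace ℝ (Fin N)) := Module.Basis.mk hli (by
    rw [Subtype.range_coe, hsspan, hspan])
  have hbasmem : ∀ i : ↥s, bas i ∈ Λ := fun i => by
    rw [Module.Basis.mk_apply]; exact hsub i.2
  let T : ↥s → (EuclideanSpace ℝ (Fin N) →L[ℝ] ℝ) :=
    fun i => LinearMap.toContinuousLinearMap (bas.coord i)
  refine ⟨Real.toNNReal (∑ i : ↥s, L * ‖bas i‖ * ‖T i‖), ?_⟩
  intro f _ hgrow hconv
  -- Step 1: along any cone direction, f is Lipschitz with constant L * ‖v‖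
  have key : ∀ (x v : EuclideanSpace ℝ (Fin N)), v ∈ Λ →
      ∀ r : ℝ, |f (x + r • v) - f x| ≤ L * ‖v‖ * |r| := by
    intro x v hv r
    set g : ℝ → ℝ := fun u => f (x + u • v) with hg_def
    have hgconv : ConvexOn ℝ Set.univ g := by
      refine ⟨convex_univ, fun p _ q _ a b ha hb hab => ?_⟩
      rcases lt_trichotomy p q with hpq | hpq | hpq
      · -- q > p : use y = x + q v, y' = x + p v and coefficient b
        have hmem : (x + q • v) - (x + p • v) ∈ Λ := by
          have : (x + q • v) - (x + p • v) = (q - p) • v := by module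
          rw [this]; exact hcone _ (sub_pos.mpr hpq) v hv
        have := hconv _ _ hmem b ⟨hb, by linarith⟩
        have hb1 : 1 - b = a := by linarith
        rw [hb1] at this
        have harg : b • (x + q • v) + a • (x + p • v) = x + (a • p + b • q) • v := by
          have ha1 : a = 1 - b := by linarith
          rw [ha1]; simp only [smul_eq_mul]; module
        rw [harg] at this
        calc g (a • p + b • q) ≤ b * f (x + q • v) + a * f (x + p • v) := this
          _ = a • g p + b • g q := by simp only [hg_def, smul_eq_mul]; ring
      · simp only [hpq]
        have : a • q + b • q = q := by rw [smul_eq_mul, smul_eq_mul, ← add_mul, hab, one_mul]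
        rw [this]
        have : a • g q + b • g q = g q := by
          rw [smul_eq_mul, smul_eq_mul, ← add_mul, hab, one_mul]
        rw [this]
      · have hmem : (x + p • v) - (x + q • v) ∈ Λ := by
          have : (x + p • v) - (x + q • v) = (p - q) • v := by module
          rw [this]; exact hcone _ (sub_pos.mpr hpq) v hv
        have := hconv _ _ hmem a ⟨ha, by linarith⟩
        have hb1 : 1 - a = b := by linarith
        rw [hb1] at this
        have harg : a • (x + p • v) + b • (x + q • v) = x + (a • p + b • q) • v := by
          have ha1 : b = 1 - a := by linarith
          rw [ha1]; simp only [smul_eq_mul]; module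
        rw [harg] at this
        calc g (a • p + b • q) ≤ a * f (x + p • v) + b * f (x + q • v) := this
          _ = a • g p + b • g q := by simp only [hg_def, smul_eq_mul]
    have hggrow : ∀ u, |g u| ≤ (L * (1 + ‖x‖)) + (L * ‖v‖) * |u| := by
      intro u
      have h1 := hgrow (x + u • v)
      have h2 : Real.sqrt (1 + ‖x + u • v‖^2) ≤ 1 + ‖x + u • v‖ := by
        have h3 : Real.sqrt (1 + ‖x + u • v‖^2) ≤ Real.sqrt ((1 + ‖x + u • v‖)^2) :=
          Real.sqrt_le_sqrt (by nlinarith [norm_nonneg (x + u • v)])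
        rwa [Real.sqrt_sq (by positivity)] at h3
      have h4 : ‖x + u • v‖ ≤ ‖x‖ + |u| * ‖v‖ := by
        calc ‖x + u • v‖ ≤ ‖x‖ + ‖u • v‖ := norm_add_le _ _
          _ = ‖x‖ + |u| * ‖v‖ := by rw [norm_smul, Real.norm_eq_abs]
      calc |g u| ≤ L * Real.sqrt (1 + ‖x + u • v‖^2) := h1
        _ ≤ L * (1 + ‖x + u • v‖) := by nlinarith
        _ ≤ L * (1 + (‖x‖ + |u| * ‖v‖)) := by nlinarith
        _ = (L * (1 + ‖x‖)) + (L * ‖v‖) * |u| := by ring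
    have := convex_abs_sub_le g hgconv (L * (1 + ‖x‖)) (L * ‖v‖) hggrow 0 r
    simpa [hg_def] using this
  -- Step 2: telescoping along basis directions
  have tele : ∀ (y : EuclideanSpace ℝ (Fin N)) (c : ↥s → ℝ) (u : Finset ↥s),
      |f (y + ∑ i ∈ u, c i • bas i) - f y| ≤ ∑ i ∈ u, L * ‖bas i‖ * |c i| := by
    intro y c u
    induction u using Finset.induction_on with
    | empty => simp
    | insert a u hni ih =>
      rw [Finset.sum_insert hni, Finset.sum_insert hni]
      have step := key (y + ∑ i ∈ u, c i • bas i) (bas a) (hbasmem a) (c a)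
      have harr : y + (c a • bas a + ∑ i ∈ u, c i • bas i)
          = (y + ∑ i ∈ u, c i • bas i) + c a • bas a := by abel
      rw [harr]
      calc |f ((y + ∑ i ∈ u, c i • bas i) + c a • bas a) - f y|
          ≤ |f ((y + ∑ i ∈ u, c i • bas i) + c a • bas a) - f (y + ∑ i ∈ u, c i • bas i)|
            + |f (y + ∑ i ∈ u, c i • bas i) - f y| := abs_sub_le _ _ _
        _ ≤ L * ‖bas a‖ * |c a| + ∑ i ∈ u, L * ‖bas i‖ * |c i| := add_le_add step ih
  -- Step 3: assemble the Lipschitz bound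
  refine LipschitzWith.of_dist_le_mul fun x y => ?_
  rw [Real.dist_eq, dist_eq_norm]
  have hx : x = y + ∑ i : ↥s, (bas.repr (x - y)) i • bas i := by
    rw [Module.Basis.sum_repr bas (x - y)]; abel
  have hbd := tele y (fun i => (bas.repr (x - y)) i) Finset.univ
  rw [← hx] at hbd
  have hcoord : ∀ i : ↥s, |(bas.repr (x - y)) i| ≤ ‖T i‖ * ‖x - y‖ := by
    intro i
    have : (bas.repr (x - y)) i = T i (x - y) := by
      simp [T, LinearMap.coe_toContinuousLinearMap', Module.Basis.coord_apply]
    rw [this, ← Real.norm_eq_abs]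
    exact (T i).le_opNorm _
  have hsum : ∑ i : ↥s, L * ‖bas i‖ * |(bas.repr (x - y)) i|
      ≤ (∑ i : ↥s, L * ‖bas i‖ * ‖T i‖) * ‖x - y‖ := by
    rw [Finset.sum_mul]
    refine Finset.sum_le_sum fun i _ => ?_
    have h1 : 0 ≤ L * ‖bas i‖ := by positivity
    calc L * ‖bas i‖ * |(bas.repr (x - y)) i| ≤ L * ‖bas i‖ * (‖T i‖ * ‖x - y‖) :=
          mul_le_mul_of_nonneg_left (hcoord i) h1
      _ = L * ‖bas i‖ * ‖T i‖ * ‖x - y‖ := by ring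
  have hKnn : (0:ℝ) ≤ ∑ i : ↥s, L * ‖bas i‖ * ‖T i‖ :=
    Finset.sum_nonneg fun i _ => by positivity
  rw [Real.coe_toNNReal _ hKnn]
  exact le_trans hbd hsum
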